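/- arXiv:1409.6925 — 2 statements merged into one kernel-verified Lean document; each statement's English description precedes it below -/
import Mathlib

section
/- (Exact complementarity.) Let c ≥ 0, let u be a feasible primal solution (Lipschitz, u ≥ 0 on [c,c+1]², partial derivatives ≤ 1 a.e. on [c,c+1]²), and let (z₁,z₂) be a feasible dual solution (Lipschitz, z₁,z₂ ≥ 0 on [c,c+1]², ∂z₁/∂x₁ + ∂z₂/∂x₂ ≤ 3 a.e. on [c,c+1]², z₁(c,x₂) ≤ c, z₁(c+1,x₂) ≥ c+1, z₂(x₁,c) ≤ c, z₂(x₁,c+1) ≥ c+1). Suppose the following complementarity conditions hold: (i) for a.e. x ∈ [c,c+1]², u(x) = 0 or ∂z₁/∂x₁(x) + ∂z₂/∂x₂(x) = 3; (ii) for a.e. x₂ ∈ [c,c+1], u(c,x₂) = 0 or z₁(c,x₂) = c, and u(c+1,x₂) = 0 or z₁(c+1,x₂) = c+1, and symmetrically for z₂ on the horizontal boundary pieces; (iii) for a.e. x ∈ [c,c+1]² and each j ∈ {1,2}, z_j(x) = 0 or ∂u/∂x_j(x) = 1. Then Rev_c(u) = ∫_{[c,c+1]²}(z₁ + z₂), and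 consequently Rev_c(u') ≤ Rev_c(u) for every feasible primal u' and ∫_{[c,c+1]²}(z₁ + z₂) ≤ ∫_{[c,c+1]²}(z₁' + z₂') for every feasible dual (z₁',z₂'). -/
open MeasureTheory Real Set

/-- Partial derivative of `u` with respect to the first coordinate
(defined via `deriv`; for Lipschitz `u` it exists a.e. by Rademacher). -/
noncomputable def pd1 (u : ℝ × ℝ → ℝ) (x : ℝ × ℝ) : ℝ := deriv (fun t => u (t, x.2)) x.1

/-- Partial derivative of `u` with respect to the second coordinate. -/
noncomputable def pd2 (u : ℝ × ℝ → ℝ) (x : ℝ × ℝ) : ℝ := deriv (fun t => u (x.1, t)) x.2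

/-- The square `[c, c+1]²`. -/
def box (c : ℝ) : Set (ℝ × ℝ) := Icc c (c + 1) ×ˢ Icc c (c + 1)

/-- The revenue of the (relaxed) mechanism induced by utility `u`:
`∫_{[c,c+1]²} (x₁ ∂u/∂x₁ + x₂ ∂u/∂x₂ − u)`. -/
noncomputable def Rev (c : ℝ) (u : ℝ × ℝ → ℝ) : ℝ :=
  ∫ x in box c, (x.1 * pd1 u x + x.2 * pd2 u x - u x)

/-- `Opt(c)`, the optimal value of the convexity-relaxed program for `0 ≤ c ≤ c̄`. -/
noncomputable def Opt (c : ℝ) : ℝ :=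
  2 / 27 * ((Real.sqrt 2 - 4) * c ^ 3
    + 3 * (Real.sqrt (c * (3 * c + 2)) + Real.sqrt 2 + 1) * c ^ 2
    + (2 * Real.sqrt (c * (3 * c + 2)) + 3 * Real.sqrt 2 + 12) * c
    + Real.sqrt 2 + 6)

/-- `BRev(c)`, the best full-bundling revenue. -/
noncomputable def BRev (c : ℝ) : ℝ :=
  2 / 27 * (-4 * c ^ 3 + Real.sqrt 2 * Real.sqrt ((2 * c ^ 2 + 3) ^ 3) + 18 * c)

/-- The critical constant `c̄ = √(15 − 8√2) − 2√2 + 1 ≈ 0.0915`. -/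
noncomputable def cbar : ℝ := Real.sqrt (15 - 8 * Real.sqrt 2) - 2 * Real.sqrt 2 + 1


theorem lip_slice1 {u : ℝ × ℝ → ℝ} {K : NNReal} (h : LipschitzWith K u) (s : ℝ) :
    LipschitzWith K (fun t => u (t, s)) := by
  simpa [Function.comp_def] using h.comp (LipschitzWith.prodMk_right s)

theorem lip_slice2 {u : ℝ × ℝ → ℝ} {K : NNReal} (h : LipschitzWith K u) (s : ℝ) :
    LipschitzWith K (fun t => u (s, t)) := by
  simpa [Function.comp_def] using h.comp (LipschitzWith.prodMk_left s)

theorem abs_deriv_le {f : ℝ → ℝ} {K : NNReal} (h : LipschitzWith K f) (t : ℝ) :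
    |deriv f t| ≤ K := by
  by_cases hd : DifferentiableAt ℝ f t
  · have h1 : ‖fderiv ℝ f t‖ ≤ K := norm_fderiv_le_of_lipschitz ℝ h
    have h2 : deriv f t = fderiv ℝ f t 1 := (fderiv_apply_one_eq_deriv).symm
    rw [h2]
    calc |fderiv ℝ f t 1| ≤ ‖fderiv ℝ f t‖ * ‖(1:ℝ)‖ := (fderiv ℝ f t).le_opNorm 1
    _ ≤ K := by simpa using h1
  · simp [deriv_zero_of_not_differentiableAt hd]

theorem lip_FTC {f : ℝ → ℝ} {K : NNReal} (h : LipschitzWith K f) {a b : ℝ} (hab : a ≤ b) :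
    ∫ t in Icc a b, deriv f t = f b - f a := by
  have hcont : Continuous f := h.continuous
  have hint : ∀ x y : ℝ, IntervalIntegrable f volume x y := fun x y =>
    hcont.intervalIntegrable x y
  set q : ℕ → ℝ → ℝ := fun n t => (f (t + ((n:ℝ)+1)⁻¹) - f t) * ((n:ℝ)+1) with hq
  have hpos : ∀ n : ℕ, (0:ℝ) < ((n:ℝ)+1)⁻¹ := fun n => by positivity
  -- bound
  have hbdd : ∀ n t, |q n t| ≤ (K:ℝ) := by
    intro n t
    have h1 : |f (t + ((n:ℝ)+1)⁻¹) - f t| ≤ K * ((n:ℝ)+1)⁻¹ := by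
      have := h.dist_le_mul (t + ((n:ℝ)+1)⁻¹) t
      have e : |(n:ℝ)+1| = (n:ℝ)+1 := abs_of_pos (by positivity)
      simpa [Real.dist_eq, abs_inv, e] using this
    have h2 : |q n t| = |f (t + ((n:ℝ)+1)⁻¹) - f t| * ((n:ℝ)+1) := by
      rw [hq]; rw [abs_mul]; congr 1; rw [abs_of_pos]; positivity
    rw [h2]
    calc |f (t + ((n:ℝ)+1)⁻¹) - f t| * ((n:ℝ)+1) ≤ (K * ((n:ℝ)+1)⁻¹) * ((n:ℝ)+1) := by
          apply mul_le_mul_of_nonneg_right h1; positivity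
      _ = K := by field_simp
  -- a.e. convergence
  have hconv : ∀ᵐ t ∂(volume.restrict (Icc a b)),
      Filter.Tendsto (fun n => q n t) Filter.atTop (nhds (deriv f t)) := by
    have hae : ∀ᵐ t : ℝ ∂volume, DifferentiableAt ℝ f t := h.ae_differentiableAt
    refine (MeasureTheory.ae_restrict_of_ae ?_)
    filter_upwards [hae] with t ht
    have hd : HasDerivAt f (deriv f t) t := ht.hasDerivAt
    rw [hasDerivAt_iff_tendsto_slope] at hd
    have hseq : Filter.Tendsto (fun n : ℕ => t + ((n:ℝ)+1)⁻¹) Filter.atTop (nhdsWithin t {t}ᶜ) := by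
      apply tendsto_nhdsWithin_of_tendsto_nhds_of_eventually_within
      · have h0 : Filter.Tendsto (fun n : ℕ => ((n:ℝ)+1)⁻¹) Filter.atTop (nhds 0) := by
          apply Filter.Tendsto.inv_tendsto_atTop
          exact Filter.tendsto_atTop_add_const_right _ 1 tendsto_natCast_atTop_atTop
        simpa using (tendsto_const_nhds.add h0)
      · filter_upwards with n
        simp only [Set.mem_compl_iff, Set.mem_singleton_iff]
        have := hpos n; intro hc; nlinarith [hc]
    have := hd.comp hseq
    apply this.congr
    intro n
    simp only [Function.comp_apply, slope_def_field]
    rw [hq]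
    field_simp
    ring
  -- DCT
  have hmeas : ∀ n, AEStronglyMeasurable (q n) (volume.restrict (Icc a b)) := by
    intro n
    exact (((hcont.comp (continuous_id.add continuous_const)).sub hcont).mul
      continuous_const).aestronglyMeasurable
  have hKint : Integrable (fun _ : ℝ => (K:ℝ)) (volume.restrict (Icc a b)) := by
    rw [MeasureTheory.integrable_const_iff]
    right
    exact isFiniteMeasure_restrict.mpr (by simp [Real.volume_Icc])
  have hdct := MeasureTheory.tendsto_integral_of_dominated_convergence
    (fun _ => (K:ℝ)) hmeas hKint
    (fun n => Filter.Eventually.of_forall (fun t => by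
      simpa [Real.norm_eq_abs] using hbdd n t)) hconv
  -- explicit limit of integrals of quotients
  have key : ∀ (x : ℝ), Filter.Tendsto
      (fun n : ℕ => (∫ t in x..(x + ((n:ℝ)+1)⁻¹), f t) * ((n:ℝ)+1))
      Filter.atTop (nhds (f x)) := by
    intro x
    have hb : ∀ n : ℕ, |(∫ t in x..(x + ((n:ℝ)+1)⁻¹), f t) * ((n:ℝ)+1) - f x|
        ≤ (K:ℝ) * ((n:ℝ)+1)⁻¹ := by
      intro n
      set hh := ((n:ℝ)+1)⁻¹ with hhh
      have hhp : (0:ℝ) < hh := hpos n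
      have e1 : (∫ t in x..(x + hh), (fun _ : ℝ => f x) t) = hh * f x := by
        simp [intervalIntegral.integral_const, smul_eq_mul]
      have e2 : (∫ t in x..(x + hh), f t) - hh * f x
          = ∫ t in x..(x + hh), (f t - f x) := by
        rw [intervalIntegral.integral_sub (hint _ _) (by
          exact intervalIntegrable_const)]
        simp
      have e3 : ‖∫ t in x..(x + hh), (f t - f x)‖ ≤ ((K:ℝ) * hh) * |x + hh - x| := by
        apply intervalIntegral.norm_integral_le_of_norm_le_const
        intro y hy
        rw [Set.uIoc_of_le (by linarith)] at hy
        have : |f y - f x| ≤ (K:ℝ) * |y - x| := by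
          have := h.dist_le_mul y x
          simpa [Real.dist_eq] using this
        refine le_trans this ?_
        apply mul_le_mul_of_nonneg_left _ (K.coe_nonneg)
        rw [abs_of_pos (by linarith [hy.1] : (0:ℝ) < y - x)]
        linarith [hy.2]
      have e4 : |(∫ t in x..(x + hh), f t) - hh * f x| ≤ (K:ℝ) * hh * hh := by
        rw [e2]
        simpa [abs_of_pos hhp] using e3
      have hm : hh * ((n:ℝ)+1) = 1 := by rw [hhh]; field_simp
      have e5 : |(∫ t in x..(x + hh), f t) * ((n:ℝ)+1) - f x|
          = |(∫ t in x..(x + hh), f t) - hh * f x| * ((n:ℝ)+1) := by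
        rw [show (∫ t in x..(x + hh), f t) * ((n:ℝ)+1) - f x
            = ((∫ t in x..(x + hh), f t) - hh * f x) * ((n:ℝ)+1) by
          linear_combination f x * hm]
        rw [abs_mul, abs_of_pos (show (0:ℝ) < (n:ℝ)+1 by positivity)]
      rw [e5]
      calc |(∫ t in x..(x + hh), f t) - hh * f x| * ((n:ℝ)+1)
          ≤ ((K:ℝ) * hh * hh) * ((n:ℝ)+1) := by
            apply mul_le_mul_of_nonneg_right e4; positivity
        _ = (K:ℝ) * hh := by rw [hhh]; field_simp
    have hto0 : Filter.Tendsto (fun n : ℕ => (K:ℝ) * ((n:ℝ)+1)⁻¹) Filter.atTop (nhds 0) := by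
      have h0 : Filter.Tendsto (fun n : ℕ => ((n:ℝ)+1)⁻¹) Filter.atTop (nhds 0) := by
        apply Filter.Tendsto.inv_tendsto_atTop
        exact Filter.tendsto_atTop_add_const_right _ 1 tendsto_natCast_atTop_atTop
      simpa using h0.const_mul (K:ℝ)
    have hsq : Filter.Tendsto
        (fun n : ℕ => (∫ t in x..(x + ((n:ℝ)+1)⁻¹), f t) * ((n:ℝ)+1) - f x)
        Filter.atTop (nhds 0) := by
      apply squeeze_zero_norm _ hto0
      intro n
      simpa [Real.norm_eq_abs] using hb n
    have h2 := hsq.add_const (f x)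
    simpa using h2
  have hcompute : ∀ n : ℕ, (∫ t in Icc a b, q n t)
      = (∫ t in b..(b + ((n:ℝ)+1)⁻¹), f t) * ((n:ℝ)+1)
        - (∫ t in a..(a + ((n:ℝ)+1)⁻¹), f t) * ((n:ℝ)+1) := by
    intro n
    set hh := ((n:ℝ)+1)⁻¹ with hhh
    have hIcc : (∫ t in Icc a b, q n t) = ∫ t in a..b, q n t := by
      rw [MeasureTheory.integral_Icc_eq_integral_Ioc, intervalIntegral.integral_of_le hab]
    rw [hIcc, hq]
    have hint2 : IntervalIntegrable (fun t => f (t + hh)) volume a b :=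
      (hcont.comp (continuous_id.add continuous_const)).intervalIntegrable a b
    have e1 : (∫ t in a..b, (f (t + hh) - f t) * ((n:ℝ)+1))
        = ((∫ t in a..b, f (t + hh)) - ∫ t in a..b, f t) * ((n:ℝ)+1) := by
      rw [intervalIntegral.integral_mul_const, intervalIntegral.integral_sub hint2 (hint a b)]
    have e2 : (∫ t in a..b, f (t + hh)) = ∫ t in (a+hh)..(b+hh), f t :=
      intervalIntegral.integral_comp_add_right f hh
    have e3 : (∫ t in a..(a+hh), f t) + (∫ t in (a+hh)..(b+hh), f t)
        = ∫ t in a..(b+hh), f t :=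
      intervalIntegral.integral_add_adjacent_intervals (hint _ _) (hint _ _)
    have e4 : (∫ t in a..b, f t) + (∫ t in b..(b+hh), f t) = ∫ t in a..(b+hh), f t :=
      intervalIntegral.integral_add_adjacent_intervals (hint _ _) (hint _ _)
    rw [e1, e2]
    have : (∫ t in (a+hh)..(b+hh), f t) - (∫ t in a..b, f t)
        = (∫ t in b..(b+hh), f t) - (∫ t in a..(a+hh), f t) := by
      linarith [e3, e4]
    rw [this]
    ring
  have hlim2 : Filter.Tendsto (fun n : ℕ => ∫ t in Icc a b, q n t)
      Filter.atTop (nhds (f b - f a)) := by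
    have := (key b).sub (key a)
    apply Filter.Tendsto.congr _ this
    intro n
    exact (hcompute n).symm
  exact tendsto_nhds_unique hdct hlim2

theorem lip_FTC_mul {f g : ℝ → ℝ} {K L : NNReal} (hf : LipschitzWith K f)
    (hg : LipschitzWith L g) {a b : ℝ} (hab : a ≤ b) :
    ∫ t in Icc a b, (deriv f t * g t + f t * deriv g t) = f b * g b - f a * g a := by
  -- bounds on f, g over Icc a b
  obtain ⟨Bf, hBf⟩ : ∃ B : ℝ, ∀ x ∈ Icc a b, |f x| ≤ B := by
    refine ⟨|f a| + K * (b - a), fun x hx => ?_⟩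
    have := hf.dist_le_mul x a
    rw [Real.dist_eq, Real.dist_eq] at this
    have h1 : |f x| - |f a| ≤ |f x - f a| := by
      have := abs_sub_abs_le_abs_sub (f x) (f a); linarith
    have h2 : |x - a| ≤ b - a := by
      rw [abs_of_nonneg (by linarith [hx.1])]; linarith [hx.2]
    nlinarith [K.coe_nonneg]
  obtain ⟨Bg, hBg⟩ : ∃ B : ℝ, ∀ x ∈ Icc a b, |g x| ≤ B := by
    refine ⟨|g a| + L * (b - a), fun x hx => ?_⟩
    have := hg.dist_le_mul x a
    rw [Real.dist_eq, Real.dist_eq] at this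
    have h1 : |g x| - |g a| ≤ |g x - g a| := by
      have := abs_sub_abs_le_abs_sub (g x) (g a); linarith
    have h2 : |x - a| ≤ b - a := by
      rw [abs_of_nonneg (by linarith [hx.1])]; linarith [hx.2]
    nlinarith [L.coe_nonneg]
  have hBf0 : 0 ≤ Bf := le_trans (abs_nonneg _) (hBf a ⟨le_refl a, hab⟩)
  have hBg0 : 0 ≤ Bg := le_trans (abs_nonneg _) (hBg a ⟨le_refl a, hab⟩)
  -- f*g is Lipschitz on Icc a b
  have hlip : LipschitzOnWith (Real.toNNReal (Bf * L + Bg * K))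
      (fun t => f t * g t) (Icc a b) := by
    rw [lipschitzOnWith_iff_dist_le_mul]
    intro x hx y hy
    rw [Real.dist_eq, Real.dist_eq]
    have e : f x * g x - f y * g y = f x * (g x - g y) + g y * (f x - f y) := by ring
    have hcoe : ((Real.toNNReal (Bf * L + Bg * K)) : ℝ) = Bf * L + Bg * K := by
      rw [Real.coe_toNNReal]; positivity
    rw [e, hcoe]
    have h1 : |f x * (g x - g y)| ≤ Bf * (L * |x - y|) := by
      rw [abs_mul]
      apply mul_le_mul (hBf x hx) _ (abs_nonneg _) hBf0
      have := hg.dist_le_mul x y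
      rwa [Real.dist_eq, Real.dist_eq] at this
    have h2 : |g y * (f x - f y)| ≤ Bg * (K * |x - y|) := by
      rw [abs_mul]
      apply mul_le_mul (hBg y hy) _ (abs_nonneg _) hBg0
      have := hf.dist_le_mul x y
      rwa [Real.dist_eq, Real.dist_eq] at this
    calc |f x * (g x - g y) + g y * (f x - f y)|
        ≤ |f x * (g x - g y)| + |g y * (f x - f y)| := abs_add_le _ _
      _ ≤ Bf * (L * |x - y|) + Bg * (K * |x - y|) := add_le_add h1 h2
      _ = (Bf * L + Bg * K) * |x - y| := by ring
  obtain ⟨F, hF, hEq⟩ := hlip.extend_real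
  have hFa : F a = f a * g a := (hEq ⟨le_refl a, hab⟩).symm
  have hFb : F b = f b * g b := (hEq ⟨hab, le_refl b⟩).symm
  have hFTC : ∫ t in Icc a b, deriv F t = f b * g b - f a * g a := by
    rw [lip_FTC hF hab, hFa, hFb]
  rw [← hFTC, MeasureTheory.integral_Icc_eq_integral_Ioo,
    MeasureTheory.integral_Icc_eq_integral_Ioo]
  apply MeasureTheory.setIntegral_congr_ae measurableSet_Ioo
  filter_upwards [hf.ae_differentiableAt, hg.ae_differentiableAt] with t htf htg ht
  have hnb : (fun s => f s * g s) =ᶠ[nhds t] F :=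
    Filter.eventually_of_mem (Ioo_mem_nhds ht.1 ht.2) (fun y hy => hEq (Ioo_subset_Icc_self hy))
  rw [← hnb.deriv_eq, deriv_fun_mul htf htg]

theorem meas_pd1 {u : ℝ × ℝ → ℝ} (h : Continuous u) : Measurable (pd1 u) := by
  have hc : Continuous (Function.uncurry (fun s t => u (t, s))) := by
    apply h.comp
    exact continuous_swap
  have := measurable_deriv_with_param (𝕜 := ℝ) (f := fun s t => u (t, s)) hc
  exact this.comp measurable_swap

theorem meas_pd2 {u : ℝ × ℝ → ℝ} (h : Continuous u) : Measurable (pd2 u) := by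
  have hc : Continuous (Function.uncurry (fun s t => u (s, t))) := by
    exact h
  have := measurable_deriv_with_param (𝕜 := ℝ) (f := fun s t => u (s, t)) hc
  exact this

theorem pd1_bound {u : ℝ × ℝ → ℝ} {K : NNReal} (h : LipschitzWith K u) (x : ℝ × ℝ) :
    |pd1 u x| ≤ K := abs_deriv_le (lip_slice1 h x.2) x.1

theorem pd2_bound {u : ℝ × ℝ → ℝ} {K : NNReal} (h : LipschitzWith K u) (x : ℝ × ℝ) :
    |pd2 u x| ≤ K := abs_deriv_le (lip_slice2 h x.1) x.2

theorem measurableSet_box (c : ℝ) : MeasurableSet (box c) :=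
  measurableSet_Icc.prod measurableSet_Icc

theorem box_finite (c : ℝ) : volume (box c) ≠ ⊤ := by
  rw [box, MeasureTheory.Measure.volume_eq_prod, MeasureTheory.Measure.prod_prod]
  simp [Real.volume_Icc]

theorem intOn {c : ℝ} {f : ℝ × ℝ → ℝ}
    (hm : AEStronglyMeasurable f volume) {C : ℝ}
    (hb : ∀ x ∈ box c, |f x| ≤ C) : IntegrableOn f (box c) := by
  apply MeasureTheory.Measure.integrableOn_of_bounded (box_finite c) hm
  rw [MeasureTheory.ae_restrict_iff' (measurableSet_box c)]
  filter_upwards with x hx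
  simpa [Real.norm_eq_abs] using hb x hx

theorem fub2 {c : ℝ} {h : ℝ × ℝ → ℝ} (hi : IntegrableOn h (box c)) :
    ∫ x in box c, h x = ∫ x₁ in Icc c (c+1), ∫ x₂ in Icc c (c+1), h (x₁, x₂) := by
  rw [box, MeasureTheory.Measure.volume_eq_prod]
  rw [box, MeasureTheory.Measure.volume_eq_prod] at hi
  exact MeasureTheory.setIntegral_prod h hi

theorem fub1 {c : ℝ} {h : ℝ × ℝ → ℝ} (hi : IntegrableOn h (box c)) :
    ∫ x in box c, h x = ∫ x₂ in Icc c (c+1), ∫ x₁ in Icc c (c+1), h (x₁, x₂) := by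
  rw [box, MeasureTheory.Measure.volume_eq_prod]
  rw [box, MeasureTheory.Measure.volume_eq_prod] at hi
  rw [IntegrableOn, ← MeasureTheory.Measure.prod_restrict] at hi
  have h2 := MeasureTheory.integral_prod_symm h hi
  rw [MeasureTheory.Measure.prod_restrict] at h2
  exact h2

theorem box_compact (c : ℝ) : IsCompact (box c) := isCompact_Icc.prod isCompact_Icc

theorem box_nonempty (c : ℝ) : (c, c) ∈ box c := by
  constructor <;> exact ⟨le_refl c, by linarith⟩

theorem IBP1 {c : ℝ} {u z : ℝ × ℝ → ℝ} {K L : NNReal}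
    (hu : LipschitzWith K u) (hz : LipschitzWith L z) :
    ∫ x in box c, (pd1 z x * u x + z x * pd1 u x)
      = ∫ x₂ in Icc c (c+1), (z (c+1, x₂) * u (c+1, x₂) - z (c, x₂) * u (c, x₂)) := by
  have hab : c ≤ c + 1 := by linarith
  obtain ⟨Bu, hBu⟩ := (box_compact c).exists_bound_of_continuousOn hu.continuous.continuousOn
  obtain ⟨Bz, hBz⟩ := (box_compact c).exists_bound_of_continuousOn hz.continuous.continuousOn
  have hBu0 : 0 ≤ Bu := le_trans (norm_nonneg _) (hBu _ (box_nonempty c))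
  have hBz0 : 0 ≤ Bz := le_trans (norm_nonneg _) (hBz _ (box_nonempty c))
  have hm : AEStronglyMeasurable (fun x => pd1 z x * u x + z x * pd1 u x) volume :=
    (((meas_pd1 hz.continuous).mul hu.continuous.measurable).add
      (hz.continuous.measurable.mul (meas_pd1 hu.continuous))).aestronglyMeasurable
  have hb : ∀ x ∈ box c, |pd1 z x * u x + z x * pd1 u x| ≤ (L:ℝ) * Bu + Bz * (K:ℝ) := by
    intro x hx
    have h1 : |pd1 z x * u x| ≤ (L:ℝ) * Bu := by
      rw [abs_mul]
      exact mul_le_mul (pd1_bound hz x) (hBu x hx) (abs_nonneg _) (L.coe_nonneg)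
    have h2 : |z x * pd1 u x| ≤ Bz * (K:ℝ) := by
      rw [abs_mul]
      exact mul_le_mul (hBz x hx) (pd1_bound hu x) (abs_nonneg _) hBz0
    calc |pd1 z x * u x + z x * pd1 u x| ≤ |pd1 z x * u x| + |z x * pd1 u x| := abs_add_le _ _
      _ ≤ (L:ℝ) * Bu + Bz * (K:ℝ) := add_le_add h1 h2
  have hi : IntegrableOn (fun x => pd1 z x * u x + z x * pd1 u x) (box c) := intOn hm hb
  rw [fub1 hi]
  refine MeasureTheory.setIntegral_congr_fun measurableSet_Icc (fun x₂ _ => ?_)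
  simpa [pd1] using lip_FTC_mul (lip_slice1 hz x₂) (lip_slice1 hu x₂) hab

theorem IBP2 {c : ℝ} {u z : ℝ × ℝ → ℝ} {K L : NNReal}
    (hu : LipschitzWith K u) (hz : LipschitzWith L z) :
    ∫ x in box c, (pd2 z x * u x + z x * pd2 u x)
      = ∫ x₁ in Icc c (c+1), (z (x₁, c+1) * u (x₁, c+1) - z (x₁, c) * u (x₁, c)) := by
  have hab : c ≤ c + 1 := by linarith
  obtain ⟨Bu, hBu⟩ := (box_compact c).exists_bound_of_continuousOn hu.continuous.continuousOn
  obtain ⟨Bz, hBz⟩ := (box_compact c).exists_bound_of_continuousOn hz.continuous.continuousOn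
  have hBu0 : 0 ≤ Bu := le_trans (norm_nonneg _) (hBu _ (box_nonempty c))
  have hBz0 : 0 ≤ Bz := le_trans (norm_nonneg _) (hBz _ (box_nonempty c))
  have hm : AEStronglyMeasurable (fun x => pd2 z x * u x + z x * pd2 u x) volume :=
    (((meas_pd2 hz.continuous).mul hu.continuous.measurable).add
      (hz.continuous.measurable.mul (meas_pd2 hu.continuous))).aestronglyMeasurable
  have hb : ∀ x ∈ box c, |pd2 z x * u x + z x * pd2 u x| ≤ (L:ℝ) * Bu + Bz * (K:ℝ) := by
    intro x hx
    have h1 : |pd2 z x * u x| ≤ (L:ℝ) * Bu := by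
      rw [abs_mul]
      exact mul_le_mul (pd2_bound hz x) (hBu x hx) (abs_nonneg _) (L.coe_nonneg)
    have h2 : |z x * pd2 u x| ≤ Bz * (K:ℝ) := by
      rw [abs_mul]
      exact mul_le_mul (hBz x hx) (pd2_bound hu x) (abs_nonneg _) hBz0
    calc |pd2 z x * u x + z x * pd2 u x| ≤ |pd2 z x * u x| + |z x * pd2 u x| := abs_add_le _ _
      _ ≤ (L:ℝ) * Bu + Bz * (K:ℝ) := add_le_add h1 h2
  have hi : IntegrableOn (fun x => pd2 z x * u x + z x * pd2 u x) (box c) := intOn hm hb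
  rw [fub2 hi]
  refine MeasureTheory.setIntegral_congr_fun measurableSet_Icc (fun x₁ _ => ?_)
  simpa [pd2] using lip_FTC_mul (lip_slice2 hz x₁) (lip_slice2 hu x₁) hab

theorem E1 {c : ℝ} {u : ℝ × ℝ → ℝ} {K : NNReal} (hu : LipschitzWith K u) :
    ∫ x in box c, (u x + x.1 * pd1 u x)
      = ∫ x₂ in Icc c (c+1), ((c+1) * u (c+1, x₂) - c * u (c, x₂)) := by
  have hz : LipschitzWith 1 (fun p : ℝ × ℝ => p.1) := LipschitzWith.prod_fst
  have h := IBP1 (c := c) hu hz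
  simp only at h
  rw [← h]
  refine MeasureTheory.setIntegral_congr_fun (measurableSet_box c) (fun x _ => ?_)
  have : pd1 (fun p : ℝ × ℝ => p.1) x = 1 := by
    simp [pd1]
  rw [this]
  ring

theorem E2 {c : ℝ} {u : ℝ × ℝ → ℝ} {K : NNReal} (hu : LipschitzWith K u) :
    ∫ x in box c, (u x + x.2 * pd2 u x)
      = ∫ x₁ in Icc c (c+1), ((c+1) * u (x₁, c+1) - c * u (x₁, c)) := by
  have hz : LipschitzWith 1 (fun p : ℝ × ℝ => p.2) := LipschitzWith.prod_snd
  have h := IBP2 (c := c) hu hz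
  simp only at h
  rw [← h]
  refine MeasureTheory.setIntegral_congr_fun (measurableSet_box c) (fun x _ => ?_)
  have : pd2 (fun p : ℝ × ℝ => p.2) x = 1 := by
    simp [pd2]
  rw [this]
  ring

theorem bound_on_box {c : ℝ} {w : ℝ × ℝ → ℝ} {K : NNReal} (hw : LipschitzWith K w) :
    ∃ B : ℝ, 0 ≤ B ∧ ∀ x ∈ box c, |w x| ≤ B := by
  obtain ⟨B, hB⟩ := (box_compact c).exists_bound_of_continuousOn hw.continuous.continuousOn
  exact ⟨B, le_trans (norm_nonneg _) (hB _ (box_nonempty c)), fun x hx => hB x hx⟩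

theorem intOn_mul_pd1 {c : ℝ} {v w : ℝ × ℝ → ℝ} {K L : NNReal}
    (hv : LipschitzWith K v) (hw : LipschitzWith L w) :
    IntegrableOn (fun x => w x * pd1 v x) (box c) := by
  obtain ⟨B, hB0, hB⟩ := bound_on_box (c := c) hw
  refine intOn ((hw.continuous.measurable.mul (meas_pd1 hv.continuous)).aestronglyMeasurable)
    (C := B * K) (fun x hx => ?_)
  rw [abs_mul]
  exact mul_le_mul (hB x hx) (pd1_bound hv x) (abs_nonneg _) hB0

theorem intOn_mul_pd2 {c : ℝ} {v w : ℝ × ℝ → ℝ} {K L : NNReal}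
    (hv : LipschitzWith K v) (hw : LipschitzWith L w) :
    IntegrableOn (fun x => w x * pd2 v x) (box c) := by
  obtain ⟨B, hB0, hB⟩ := bound_on_box (c := c) hw
  refine intOn ((hw.continuous.measurable.mul (meas_pd2 hv.continuous)).aestronglyMeasurable)
    (C := B * K) (fun x hx => ?_)
  rw [abs_mul]
  exact mul_le_mul (hB x hx) (pd2_bound hv x) (abs_nonneg _) hB0

theorem intOn_pd1_mul {c : ℝ} {v w : ℝ × ℝ → ℝ} {K L : NNReal}
    (hv : LipschitzWith K v) (hw : LipschitzWith L w) :
    IntegrableOn (fun x => pd1 v x * w x) (box c) := by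
  have h := intOn_mul_pd1 (c := c) hv hw
  apply h.congr_fun (fun x _ => mul_comm _ _) (measurableSet_box c)

theorem intOn_pd2_mul {c : ℝ} {v w : ℝ × ℝ → ℝ} {K L : NNReal}
    (hv : LipschitzWith K v) (hw : LipschitzWith L w) :
    IntegrableOn (fun x => pd2 v x * w x) (box c) := by
  have h := intOn_mul_pd2 (c := c) hv hw
  apply h.congr_fun (fun x _ => mul_comm _ _) (measurableSet_box c)

theorem intOn_lip {c : ℝ} {w : ℝ × ℝ → ℝ} {K : NNReal} (hw : LipschitzWith K w) :
    IntegrableOn w (box c) :=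
  hw.continuous.continuousOn.integrableOn_compact (box_compact c)

theorem intOn_x1_pd1 {c : ℝ} {v : ℝ × ℝ → ℝ} {K : NNReal} (hv : LipschitzWith K v) :
    IntegrableOn (fun x => x.1 * pd1 v x) (box c) := by
  refine intOn ((measurable_fst.mul (meas_pd1 hv.continuous)).aestronglyMeasurable)
    (C := (|c| + 1) * K) (fun x hx => ?_)
  rw [abs_mul]
  refine mul_le_mul ?_ (pd1_bound hv x) (abs_nonneg _) (by positivity)
  have h1 := hx.1.1; have h2 := hx.1.2
  exact abs_le.2 ⟨by linarith [neg_abs_le c], by linarith [le_abs_self c]⟩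

theorem intOn_x2_pd2 {c : ℝ} {v : ℝ × ℝ → ℝ} {K : NNReal} (hv : LipschitzWith K v) :
    IntegrableOn (fun x => x.2 * pd2 v x) (box c) := by
  refine intOn ((measurable_snd.mul (meas_pd2 hv.continuous)).aestronglyMeasurable)
    (C := (|c| + 1) * K) (fun x hx => ?_)
  rw [abs_mul]
  refine mul_le_mul ?_ (pd2_bound hv x) (abs_nonneg _) (by positivity)
  have h1 := hx.2.1; have h2 := hx.2.2
  exact abs_le.2 ⟨by linarith [neg_abs_le c], by linarith [le_abs_self c]⟩

theorem rev_formula {c : ℝ} {u : ℝ × ℝ → ℝ} {K : NNReal} (hu : LipschitzWith K u) :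
    (∫ x in box c, (x.1 * pd1 u x + x.2 * pd2 u x - u x))
    = (∫ x₂ in Icc c (c+1), ((c+1) * u (c+1, x₂) - c * u (c, x₂)))
      + (∫ x₁ in Icc c (c+1), ((c+1) * u (x₁, c+1) - c * u (x₁, c)))
      - 3 * ∫ x in box c, u x := by
  have hU : IntegrableOn u (box c) := intOn_lip hu
  have hA : IntegrableOn (fun x => u x + x.1 * pd1 u x) (box c) := hU.add (intOn_x1_pd1 hu)
  have hB : IntegrableOn (fun x => u x + x.2 * pd2 u x) (box c) := hU.add (intOn_x2_pd2 hu)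
  have hcg : EqOn (fun x : ℝ × ℝ => x.1 * pd1 u x + x.2 * pd2 u x - u x)
      (fun x => ((u x + x.1 * pd1 u x) + (u x + x.2 * pd2 u x)) - 3 * u x) (box c) :=
    fun x _ => by ring
  have hAB : IntegrableOn (fun x => (u x + x.1 * pd1 u x) + (u x + x.2 * pd2 u x)) (box c) :=
    hA.add hB
  have h3U : IntegrableOn (fun x => 3 * u x) (box c) := hU.const_mul 3
  rw [MeasureTheory.setIntegral_congr_fun (measurableSet_box c) hcg,
    MeasureTheory.integral_sub hAB h3U,
    MeasureTheory.integral_add hA hB, MeasureTheory.integral_const_mul 3 u, E1 hu, E2 hu]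

theorem mid_identity {c : ℝ} {u z₁ z₂ : ℝ × ℝ → ℝ} {K L₁ L₂ : NNReal}
    (hu : LipschitzWith K u) (hz₁ : LipschitzWith L₁ z₁) (hz₂ : LipschitzWith L₂ z₂) :
    ∫ x in box c, (u x * (pd1 z₁ x + pd2 z₂ x))
      = (∫ x₂ in Icc c (c+1), (z₁ (c+1, x₂) * u (c+1, x₂) - z₁ (c, x₂) * u (c, x₂)))
        + (∫ x₁ in Icc c (c+1), (z₂ (x₁, c+1) * u (x₁, c+1) - z₂ (x₁, c) * u (x₁, c)))
        - ∫ x in box c, (z₁ x * pd1 u x + z₂ x * pd2 u x) := by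
  have h1 := IBP1 (c := c) hu hz₁
  have h2 := IBP2 (c := c) hu hz₂
  have ha : IntegrableOn (fun x => pd1 z₁ x * u x + z₁ x * pd1 u x) (box c) :=
    (intOn_pd1_mul hz₁ hu).add (intOn_mul_pd1 hu hz₁)
  have hb : IntegrableOn (fun x => pd2 z₂ x * u x + z₂ x * pd2 u x) (box c) :=
    (intOn_pd2_mul hz₂ hu).add (intOn_mul_pd2 hu hz₂)
  have hT : IntegrableOn (fun x => z₁ x * pd1 u x + z₂ x * pd2 u x) (box c) :=
    (intOn_mul_pd1 hu hz₁).add (intOn_mul_pd2 hu hz₂)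
  have hab2 : IntegrableOn (fun x => (pd1 z₁ x * u x + z₁ x * pd1 u x)
      + (pd2 z₂ x * u x + z₂ x * pd2 u x)) (box c) := ha.add hb
  have hcg : EqOn (fun x : ℝ × ℝ => u x * (pd1 z₁ x + pd2 z₂ x))
      (fun x => ((pd1 z₁ x * u x + z₁ x * pd1 u x) + (pd2 z₂ x * u x + z₂ x * pd2 u x))
        - (z₁ x * pd1 u x + z₂ x * pd2 u x)) (box c) := fun x _ => by ring
  rw [MeasureTheory.setIntegral_congr_fun (measurableSet_box c) hcg,
    MeasureTheory.integral_sub hab2 hT, MeasureTheory.integral_add ha hb, h1, h2]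

theorem duality_le {c : ℝ} {u z₁ z₂ : ℝ × ℝ → ℝ} {K L₁ L₂ : NNReal}
    (hu : LipschitzWith K u) (hz₁ : LipschitzWith L₁ z₁) (hz₂ : LipschitzWith L₂ z₂)
    (hunn : ∀ x ∈ box c, 0 ≤ u x)
    (huder : ∀ᵐ x ∂(volume.restrict (box c)), pd1 u x ≤ 1 ∧ pd2 u x ≤ 1)
    (hz₁nn : ∀ x ∈ box c, 0 ≤ z₁ x) (hz₂nn : ∀ x ∈ box c, 0 ≤ z₂ x)
    (hzder : ∀ᵐ x ∂(volume.restrict (box c)), pd1 z₁ x + pd2 z₂ x ≤ 3)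
    (hz₁lo : ∀ x₂ ∈ Icc c (c + 1), z₁ (c, x₂) ≤ c)
    (hz₁hi : ∀ x₂ ∈ Icc c (c + 1), c + 1 ≤ z₁ (c + 1, x₂))
    (hz₂lo : ∀ x₁ ∈ Icc c (c + 1), z₂ (x₁, c) ≤ c)
    (hz₂hi : ∀ x₁ ∈ Icc c (c + 1), c + 1 ≤ z₂ (x₁, c + 1)) :
    (∫ x in box c, (x.1 * pd1 u x + x.2 * pd2 u x - u x))
      ≤ ∫ x in box c, (z₁ x + z₂ x) := by
  have hab : c ≤ c + 1 := by linarith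
  have hrev := rev_formula (c := c) hu
  have hmid := mid_identity (c := c) hu hz₁ hz₂
  have hU : IntegrableOn u (box c) := intOn_lip hu
  have hus_int : IntegrableOn (fun x => u x * (pd1 z₁ x + pd2 z₂ x)) (box c) := by
    have h : IntegrableOn (fun x => u x * pd1 z₁ x + u x * pd2 z₂ x) (box c) :=
      (intOn_mul_pd1 hz₁ hu).add (intOn_mul_pd2 hz₂ hu)
    exact h.congr_fun (fun x _ => (mul_add _ _ _).symm) (measurableSet_box c)
  have hT : IntegrableOn (fun x => z₁ x * pd1 u x + z₂ x * pd2 u x) (box c) :=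
    (intOn_mul_pd1 hu hz₁).add (intOn_mul_pd2 hu hz₂)
  have hD : IntegrableOn (fun x => z₁ x + z₂ x) (box c) :=
    (intOn_lip hz₁).add (intOn_lip hz₂)
  have hunn_ae : ∀ᵐ x ∂(volume.restrict (box c)), 0 ≤ u x :=
    (ae_restrict_iff' (measurableSet_box c)).2 (Filter.Eventually.of_forall hunn)
  have hz₁nn_ae : ∀ᵐ x ∂(volume.restrict (box c)), 0 ≤ z₁ x :=
    (ae_restrict_iff' (measurableSet_box c)).2 (Filter.Eventually.of_forall hz₁nn)
  have hz₂nn_ae : ∀ᵐ x ∂(volume.restrict (box c)), 0 ≤ z₂ x :=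
    (ae_restrict_iff' (measurableSet_box c)).2 (Filter.Eventually.of_forall hz₂nn)
  have i1 : ∫ x in box c, (u x * (pd1 z₁ x + pd2 z₂ x)) ≤ 3 * ∫ x in box c, u x := by
    rw [← MeasureTheory.integral_const_mul 3 u]
    refine MeasureTheory.integral_mono_ae hus_int (hU.const_mul 3) ?_
    filter_upwards [hzder, hunn_ae] with x h1 h2
    nlinarith
  have i3 : (∫ x in box c, (z₁ x * pd1 u x + z₂ x * pd2 u x))
      ≤ ∫ x in box c, (z₁ x + z₂ x) := by
    refine MeasureTheory.integral_mono_ae hT hD ?_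
    filter_upwards [huder, hz₁nn_ae, hz₂nn_ae] with x h1 h2 h3
    nlinarith [h1.1, h1.2]
  have hcont1 : ∀ (a : ℝ), Continuous (fun t => u (a, t)) := fun a => (lip_slice2 hu a).continuous
  have hcont2 : ∀ (a : ℝ), Continuous (fun t => u (t, a)) := fun a => (lip_slice1 hu a).continuous
  have i4a : (∫ x₂ in Icc c (c+1), ((c+1) * u (c+1, x₂) - c * u (c, x₂)))
      ≤ ∫ x₂ in Icc c (c+1), (z₁ (c+1, x₂) * u (c+1, x₂) - z₁ (c, x₂) * u (c, x₂)) := by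
    refine MeasureTheory.setIntegral_mono_on ?_ ?_ measurableSet_Icc ?_
    · exact ((continuous_const.mul (hcont1 (c+1))).sub
        (continuous_const.mul (hcont1 c))).continuousOn.integrableOn_compact isCompact_Icc
    · exact (((lip_slice2 hz₁ (c+1)).continuous.mul (hcont1 (c+1))).sub
        ((lip_slice2 hz₁ c).continuous.mul (hcont1 c))).continuousOn.integrableOn_compact
        isCompact_Icc
    · intro x₂ hx
      have hm1 : ((c+1 : ℝ), x₂) ∈ box c := ⟨⟨hab, le_refl _⟩, hx⟩
      have hm0 : ((c : ℝ), x₂) ∈ box c := ⟨⟨le_refl _, hab⟩, hx⟩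
      nlinarith [hunn _ hm1, hunn _ hm0, hz₁hi x₂ hx, hz₁lo x₂ hx]
  have i4b : (∫ x₁ in Icc c (c+1), ((c+1) * u (x₁, c+1) - c * u (x₁, c)))
      ≤ ∫ x₁ in Icc c (c+1), (z₂ (x₁, c+1) * u (x₁, c+1) - z₂ (x₁, c) * u (x₁, c)) := by
    refine MeasureTheory.setIntegral_mono_on ?_ ?_ measurableSet_Icc ?_
    · exact ((continuous_const.mul (hcont2 (c+1))).sub
        (continuous_const.mul (hcont2 c))).continuousOn.integrableOn_compact isCompact_Icc
    · exact (((lip_slice1 hz₂ (c+1)).continuous.mul (hcont2 (c+1))).sub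
        ((lip_slice1 hz₂ c).continuous.mul (hcont2 c))).continuousOn.integrableOn_compact
        isCompact_Icc
    · intro x₁ hx
      have hm1 : (x₁, (c+1 : ℝ)) ∈ box c := ⟨hx, ⟨hab, le_refl _⟩⟩
      have hm0 : (x₁, (c : ℝ)) ∈ box c := ⟨hx, ⟨le_refl _, hab⟩⟩
      nlinarith [hunn _ hm1, hunn _ hm0, hz₂hi x₁ hx, hz₂lo x₁ hx]
  linarith [hrev, hmid, i1, i3, i4a, i4b]

theorem duality_eq {c : ℝ} {u z₁ z₂ : ℝ × ℝ → ℝ} {K L₁ L₂ : NNReal}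
    (hu : LipschitzWith K u) (hz₁ : LipschitzWith L₁ z₁) (hz₂ : LipschitzWith L₂ z₂)
    (hcomp₁ : ∀ᵐ x ∂(volume.restrict (box c)), u x = 0 ∨ pd1 z₁ x + pd2 z₂ x = 3)
    (hcomp₂ : ∀ᵐ x₂ ∂(volume.restrict (Icc c (c + 1))),
      (u (c, x₂) = 0 ∨ z₁ (c, x₂) = c) ∧ (u (c + 1, x₂) = 0 ∨ z₁ (c + 1, x₂) = c + 1))
    (hcomp₂' : ∀ᵐ x₁ ∂(volume.restrict (Icc c (c + 1))),
      (u (x₁, c) = 0 ∨ z₂ (x₁, c) = c) ∧ (u (x₁, c + 1) = 0 ∨ z₂ (x₁, c + 1) = c + 1))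
    (hcomp₃ : ∀ᵐ x ∂(volume.restrict (box c)),
      (z₁ x = 0 ∨ pd1 u x = 1) ∧ (z₂ x = 0 ∨ pd2 u x = 1)) :
    (∫ x in box c, (x.1 * pd1 u x + x.2 * pd2 u x - u x))
      = ∫ x in box c, (z₁ x + z₂ x) := by
  have hrev := rev_formula (c := c) hu
  have hmid := mid_identity (c := c) hu hz₁ hz₂
  have e1 : ∫ x in box c, (u x * (pd1 z₁ x + pd2 z₂ x)) = 3 * ∫ x in box c, u x := by
    rw [← MeasureTheory.integral_const_mul 3 u]
    refine MeasureTheory.integral_congr_ae ?_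
    filter_upwards [hcomp₁] with x hx
    rcases hx with h | h
    · rw [h]; ring
    · rw [h]; ring
  have e3 : (∫ x in box c, (z₁ x * pd1 u x + z₂ x * pd2 u x))
      = ∫ x in box c, (z₁ x + z₂ x) := by
    refine MeasureTheory.integral_congr_ae ?_
    filter_upwards [hcomp₃] with x hx
    have h1 : z₁ x * pd1 u x = z₁ x := by
      rcases hx.1 with h | h
      · rw [h]; ring
      · rw [h]; ring
    have h2 : z₂ x * pd2 u x = z₂ x := by
      rcases hx.2 with h | h
      · rw [h]; ring
      · rw [h]; ring
    rw [h1, h2]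
  have e4a : (∫ x₂ in Icc c (c+1), ((c+1) * u (c+1, x₂) - c * u (c, x₂)))
      = ∫ x₂ in Icc c (c+1), (z₁ (c+1, x₂) * u (c+1, x₂) - z₁ (c, x₂) * u (c, x₂)) := by
    refine MeasureTheory.integral_congr_ae ?_
    filter_upwards [hcomp₂] with x₂ hx
    have h1 : (c+1) * u (c+1, x₂) = z₁ (c+1, x₂) * u (c+1, x₂) := by
      rcases hx.2 with h | h
      · rw [h]; ring
      · rw [h]
    have h2 : c * u (c, x₂) = z₁ (c, x₂) * u (c, x₂) := by
      rcases hx.1 with h | h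
      · rw [h]; ring
      · rw [h]
    rw [h1, h2]
  have e4b : (∫ x₁ in Icc c (c+1), ((c+1) * u (x₁, c+1) - c * u (x₁, c)))
      = ∫ x₁ in Icc c (c+1), (z₂ (x₁, c+1) * u (x₁, c+1) - z₂ (x₁, c) * u (x₁, c)) := by
    refine MeasureTheory.integral_congr_ae ?_
    filter_upwards [hcomp₂'] with x₁ hx
    have h1 : (c+1) * u (x₁, c+1) = z₂ (x₁, c+1) * u (x₁, c+1) := by
      rcases hx.2 with h | h
      · rw [h]; ring
      · rw [h]
    have h2 : c * u (x₁, c) = z₂ (x₁, c) * u (x₁, c) := by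
      rcases hx.1 with h | h
      · rw [h]; ring
      · rw [h]
    rw [h1, h2]
  linarith [hrev, hmid, e1, e3, e4a, e4b]

/-- exact complementarity: if a feasible primal `u` and a feasible
dual `(z₁, z₂)` satisfy the complementarity conditions (i)–(iii), then
`Rev_c(u) = ∫ (z₁ + z₂)`, `u` is primal-optimal and `(z₁, z₂)` is dual-optimal. -/
theorem exact_complementarity (c : ℝ) (hc : 0 ≤ c)
    (u : ℝ × ℝ → ℝ) (huLip : ∃ K : NNReal, LipschitzWith K u)
    (hunn : ∀ x ∈ box c, 0 ≤ u x)
    (huder : ∀ᵐ x ∂(volume.restrict (box c)), pd1 u x ≤ 1 ∧ pd2 u x ≤ 1)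
    (z₁ z₂ : ℝ × ℝ → ℝ)
    (hz₁Lip : ∃ K : NNReal, LipschitzWith K z₁)
    (hz₂Lip : ∃ K : NNReal, LipschitzWith K z₂)
    (hz₁nn : ∀ x ∈ box c, 0 ≤ z₁ x) (hz₂nn : ∀ x ∈ box c, 0 ≤ z₂ x)
    (hzder : ∀ᵐ x ∂(volume.restrict (box c)), pd1 z₁ x + pd2 z₂ x ≤ 3)
    (hz₁lo : ∀ x₂ ∈ Icc c (c + 1), z₁ (c, x₂) ≤ c)
    (hz₁hi : ∀ x₂ ∈ Icc c (c + 1), c + 1 ≤ z₁ (c + 1, x₂))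
    (hz₂lo : ∀ x₁ ∈ Icc c (c + 1), z₂ (x₁, c) ≤ c)
    (hz₂hi : ∀ x₁ ∈ Icc c (c + 1), c + 1 ≤ z₂ (x₁, c + 1))
    -- (i) interior complementarity
    (hcomp₁ : ∀ᵐ x ∂(volume.restrict (box c)),
      u x = 0 ∨ pd1 z₁ x + pd2 z₂ x = 3)
    -- (ii) boundary complementarity
    (hcomp₂ : ∀ᵐ x₂ ∂(volume.restrict (Icc c (c + 1))),
      (u (c, x₂) = 0 ∨ z₁ (c, x₂) = c) ∧
      (u (c + 1, x₂) = 0 ∨ z₁ (c + 1, x₂) = c + 1))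
    (hcomp₂' : ∀ᵐ x₁ ∂(volume.restrict (Icc c (c + 1))),
      (u (x₁, c) = 0 ∨ z₂ (x₁, c) = c) ∧
      (u (x₁, c + 1) = 0 ∨ z₂ (x₁, c + 1) = c + 1))
    -- (iii) dual complementarity
    (hcomp₃ : ∀ᵐ x ∂(volume.restrict (box c)),
      (z₁ x = 0 ∨ pd1 u x = 1) ∧ (z₂ x = 0 ∨ pd2 u x = 1)) :
    Rev c u = (∫ x in box c, (z₁ x + z₂ x)) ∧
    (∀ u' : ℝ × ℝ → ℝ, (∃ K : NNReal, LipschitzWith K u') →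
      (∀ x ∈ box c, 0 ≤ u' x) →
      (∀ᵐ x ∂(volume.restrict (box c)), pd1 u' x ≤ 1 ∧ pd2 u' x ≤ 1) →
      Rev c u' ≤ Rev c u) ∧
    (∀ z₁' z₂' : ℝ × ℝ → ℝ,
      (∃ K : NNReal, LipschitzWith K z₁') → (∃ K : NNReal, LipschitzWith K z₂') →
      (∀ x ∈ box c, 0 ≤ z₁' x) → (∀ x ∈ box c, 0 ≤ z₂' x) →
      (∀ᵐ x ∂(volume.restrict (box c)), pd1 z₁' x + pd2 z₂' x ≤ 3) →
      (∀ x₂ ∈ Icc c (c + 1), z₁' (c, x₂) ≤ c) →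
      (∀ x₂ ∈ Icc c (c + 1), c + 1 ≤ z₁' (c + 1, x₂)) →
      (∀ x₁ ∈ Icc c (c + 1), z₂' (x₁, c) ≤ c) →
      (∀ x₁ ∈ Icc c (c + 1), c + 1 ≤ z₂' (x₁, c + 1)) →
      (∫ x in box c, (z₁ x + z₂ x)) ≤ ∫ x in box c, (z₁' x + z₂' x)) := by
  obtain ⟨K, hu⟩ := huLip
  obtain ⟨L₁, hz₁⟩ := hz₁Lip
  obtain ⟨L₂, hz₂⟩ := hz₂Lip
  have heq : Rev c u = ∫ x in box c, (z₁ x + z₂ x) := by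
    rw [Rev]
    exact duality_eq hu hz₁ hz₂ hcomp₁ hcomp₂ hcomp₂' hcomp₃
  refine ⟨heq, ?_, ?_⟩
  · intro u' hL hnn hder
    obtain ⟨K', hu'⟩ := hL
    rw [heq, Rev]
    exact duality_le hu' hz₁ hz₂ hnn hder hz₁nn hz₂nn hzder hz₁lo hz₁hi hz₂lo hz₂hi
  · intro z₁' z₂' h1 h2 h3 h4 h5 h6 h7 h8 h9
    obtain ⟨L₁', hz₁'⟩ := h1
    obtain ⟨L₂', hz₂'⟩ := h2
    rw [← heq, Rev]
    exact duality_le hu hz₁' hz₂' hunn huder h3 h4 h5 h6 h7 h8 h9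
end

section
/- For every c ≥ 0 and every s ≥ 0, the full-bundling utility u_s(x₁,x₂) = max{0, x₁ + x₂ − s} satisfies Rev_c(u_s) ≤ BRev(c); consequently, for every c with 0.077 < c < c̄, no full-bundling mechanism attains the relaxed optimum, since Rev_c(u_s) ≤ BRev(c) < Opt(c) for all s ≥ 0. -/
open MeasureTheory Real Set

lemma line_null (s : ℝ) : volume {x : ℝ × ℝ | x.1 + x.2 = s} = 0 := by
  have hmeas : MeasurableSet {x : ℝ × ℝ | x.1 + x.2 = s} :=
    (isClosed_eq (continuous_fst.add continuous_snd) continuous_const).measurableSet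
  rw [Measure.volume_eq_prod ℝ ℝ, MeasureTheory.Measure.measure_prod_null hmeas]
  refine Filter.Eventually.of_forall (fun x => ?_)
  have h : (Prod.mk x ⁻¹' {x : ℝ × ℝ | x.1 + x.2 = s}) = {s - x} := by
    ext y
    simp only [mem_preimage, mem_setOf_eq, mem_singleton_iff]
    constructor <;> intro h <;> linarith
  simp [h]

lemma ae_identity (c s : ℝ) : ∀ᵐ x : ℝ × ℝ, x ∈ box c →
    (x.1 * pd1 (fun x : ℝ × ℝ => max 0 (x.1 + x.2 - s)) x
      + x.2 * pd2 (fun x : ℝ × ℝ => max 0 (x.1 + x.2 - s)) x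
      - max 0 (x.1 + x.2 - s))
    = Set.indicator {x : ℝ × ℝ | s < x.1 + x.2} (fun _ => s) x := by
  have hae : ∀ᵐ x : ℝ × ℝ, x ∉ {x : ℝ × ℝ | x.1 + x.2 = s} :=
    measure_eq_zero_iff_ae_notMem.mp (line_null s)
  filter_upwards [hae] with x hx _
  have hne : x.1 + x.2 ≠ s := hx
  rcases hne.lt_or_gt with hlt | hgt
  · have hp1 : pd1 (fun x : ℝ × ℝ => max 0 (x.1 + x.2 - s)) x = 0 := by
      show deriv (fun t => max 0 (t + x.2 - s)) x.1 = 0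
      have hev : (fun t => max 0 (t + x.2 - s)) =ᶠ[nhds x.1] (fun _ => (0:ℝ)) := by
        filter_upwards [Iio_mem_nhds (show x.1 < s - x.2 by linarith)] with t ht
        exact max_eq_left (by simp only [mem_Iio] at ht; linarith)
      rw [hev.deriv_eq, deriv_const]
    have hp2 : pd2 (fun x : ℝ × ℝ => max 0 (x.1 + x.2 - s)) x = 0 := by
      show deriv (fun t => max 0 (x.1 + t - s)) x.2 = 0
      have hev : (fun t => max 0 (x.1 + t - s)) =ᶠ[nhds x.2] (fun _ => (0:ℝ)) := by
        filter_upwards [Iio_mem_nhds (show x.2 < s - x.1 by linarith)] with t ht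
        exact max_eq_left (by simp only [mem_Iio] at ht; linarith)
      rw [hev.deriv_eq, deriv_const]
    rw [hp1, hp2, Set.indicator_of_notMem (by simp only [mem_setOf_eq]; push_neg; linarith),
      max_eq_left (by linarith)]
    ring
  · have hp1 : pd1 (fun x : ℝ × ℝ => max 0 (x.1 + x.2 - s)) x = 1 := by
      show deriv (fun t => max 0 (t + x.2 - s)) x.1 = 1
      have hev : (fun t => max 0 (t + x.2 - s)) =ᶠ[nhds x.1] (fun t => t + (x.2 - s)) := by
        filter_upwards [Ioi_mem_nhds (show s - x.2 < x.1 by linarith)] with t ht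
        rw [max_eq_right (by simp only [mem_Ioi] at ht; linarith)]; ring
      rw [hev.deriv_eq]
      simp
    have hp2 : pd2 (fun x : ℝ × ℝ => max 0 (x.1 + x.2 - s)) x = 1 := by
      show deriv (fun t => max 0 (x.1 + t - s)) x.2 = 1
      have hev : (fun t => max 0 (x.1 + t - s)) =ᶠ[nhds x.2] (fun t => t + (x.1 - s)) := by
        filter_upwards [Ioi_mem_nhds (show s - x.1 < x.2 by linarith)] with t ht
        rw [max_eq_right (by simp only [mem_Ioi] at ht; linarith)]; ring
      rw [hev.deriv_eq]
      simp
    rw [hp1, hp2, Set.indicator_of_mem (by simp only [mem_setOf_eq]; linarith),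
      max_eq_right (by linarith)]
    ring

lemma box_volume (c : ℝ) : volume (box c) = 1 := by
  rw [box, Measure.volume_eq_prod ℝ ℝ, Measure.prod_prod, Real.volume_Icc]
  norm_num

lemma tri_volume (c s : ℝ) (h1 : 2*c ≤ s) :
    volume (regionBetween (fun _ => c) (fun x => s - x) (Ioo c (s - c))) =
      ENNReal.ofReal ((s - 2*c)^2/2) := by
  have f_int : IntegrableOn (fun _ : ℝ => c) (Ioo c (s - c)) volume :=
    (integrableOn_const_iff).mpr (Or.inr (by rw [Real.volume_Ioo]; exact ENNReal.ofReal_lt_top))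
  have g_int : IntegrableOn (fun x : ℝ => s - x) (Ioo c (s - c)) volume :=
    ((Continuous.integrableOn_Icc (by continuity)).mono_set Ioo_subset_Icc_self)
  rw [Measure.volume_eq_prod ℝ ℝ]
  rw [volume_regionBetween_eq_integral f_int g_int measurableSet_Ioo
    (fun x hx => by simp only [mem_Ioo] at hx; linarith [hx.2])]
  congr 1
  have hfe : (fun y : ℝ => ((fun x : ℝ => s - x) - (fun _ : ℝ => c)) y) = fun y : ℝ => (s - c) - y := by
    funext y; simp only [Pi.sub_apply]; ring
  rw [hfe, ← MeasureTheory.integral_Ioc_eq_integral_Ioo,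
    ← intervalIntegral.integral_of_le (by linarith : c ≤ s - c),
    intervalIntegral.integral_sub (intervalIntegrable_const) intervalIntegral.intervalIntegrable_id,
    intervalIntegral.integral_const, integral_id]
  simp only [smul_eq_mul]
  ring

lemma upper_volume (c s : ℝ) (h2 : s ≤ 2*c+2) :
    volume (regionBetween (fun x => s - x) (fun _ => c+1) (Ioo (s-c-1) (c+1))) =
      ENNReal.ofReal ((2*c+2-s)^2/2) := by
  have f_int : IntegrableOn (fun x : ℝ => s - x) (Ioo (s-c-1) (c+1)) volume :=
    ((Continuous.integrableOn_Icc (by continuity)).mono_set Ioo_subset_Icc_self)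
  have g_int : IntegrableOn (fun _ : ℝ => c+1) (Ioo (s-c-1) (c+1)) volume :=
    (integrableOn_const_iff).mpr (Or.inr (by rw [Real.volume_Ioo]; exact ENNReal.ofReal_lt_top))
  rw [Measure.volume_eq_prod ℝ ℝ]
  rw [volume_regionBetween_eq_integral f_int g_int measurableSet_Ioo
    (fun x hx => by simp only [mem_Ioo] at hx; linarith [hx.1])]
  congr 1
  have hfe : (fun y : ℝ => ((fun _ : ℝ => c+1) - (fun x : ℝ => s - x)) y)
      = fun y : ℝ => y - (s - c - 1) := by
    funext y; simp only [Pi.sub_apply]; ring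
  rw [hfe, ← MeasureTheory.integral_Ioc_eq_integral_Ioo,
    ← intervalIntegral.integral_of_le (by linarith : s - c - 1 ≤ c + 1),
    intervalIntegral.integral_sub intervalIntegral.intervalIntegrable_id intervalIntegrable_const,
    intervalIntegral.integral_const, integral_id]
  simp only [smul_eq_mul]
  ring


lemma brev_eq (c : ℝ) : BRev c = 2 / 27 * (-4 * c ^ 3 + Real.sqrt (4*c^2+6) * (2*c^2+3) + 18 * c) := by
  have h1 : Real.sqrt 2 * Real.sqrt ((2 * c ^ 2 + 3) ^ 3) = Real.sqrt (4*c^2+6) * (2*c^2+3) := by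
    rw [← Real.sqrt_mul (by norm_num : (0:ℝ) ≤ 2)]
    have h2 : (2:ℝ) * (2 * c ^ 2 + 3) ^ 3 = (4*c^2+6) * (2*c^2+3)^2 := by ring
    rw [h2, Real.sqrt_mul (by positivity), Real.sqrt_sq (by positivity)]
  rw [BRev, h1]

lemma cubic_bound (c : ℝ) (hc : 0 ≤ c) (s : ℝ) (hs : 0 ≤ s) :
    s * (1 - (s - 2*c)^2/2) ≤ BRev c := by
  set r := Real.sqrt (4*c^2+6) with hr
  have hr0 : 0 ≤ r := Real.sqrt_nonneg _
  have hr2 : r^2 = 4*c^2+6 := Real.sq_sqrt (by positivity)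
  have hB : BRev c = 2 / 27 * (-4 * c ^ 3 + r * (2*c^2+3) + 18 * c) := brev_eq c
  have hrc : 2*c ≤ r := by nlinarith
  have key : 54*(BRev c - s*(1-(s-2*c)^2/2))
      = (3*s-4*c-r)^2*(3*s-4*c+2*r) + (9*s-12*c-2*r)*(r^2-(4*c^2+6)) := by
    rw [hB]; ring
  have h1 : 0 ≤ (3*s-4*c-r)^2*(3*s-4*c+2*r) :=
    mul_nonneg (sq_nonneg _) (by linarith)
  have h2 : (9*s-12*c-2*r)*(r^2-(4*c^2+6)) = 0 := by rw [hr2]; ring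
  linarith [key, h1, h2]

lemma rev_le (c : ℝ) (hc : 0 ≤ c) (s : ℝ) (hs : 0 ≤ s) :
    Rev c (fun x : ℝ × ℝ => max 0 (x.1 + x.2 - s)) ≤ BRev c := by
  have hE'm : MeasurableSet {x : ℝ × ℝ | s < x.1 + x.2} :=
    (isOpen_lt continuous_const (continuous_fst.add continuous_snd)).measurableSet
  have hboxm : MeasurableSet (box c) := measurableSet_Icc.prod measurableSet_Icc
  have hBRev0 : 2*c ≤ BRev c := by
    have := cubic_bound c hc (2*c) (by linarith)
    have he : (2*c) * (1 - (2*c - 2*c)^2/2) = 2*c := by ring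
    linarith [he ▸ this]
  have hBhalf : (2*c+1)/2 ≤ BRev c := by
    have := cubic_bound c hc (2*c+1) (by linarith)
    have he : (2*c+1) * (1 - (2*c+1 - 2*c)^2/2) = (2*c+1)/2 := by ring
    linarith [he ▸ this]
  have hRev : Rev c (fun x : ℝ × ℝ => max 0 (x.1 + x.2 - s))
      = (volume (box c ∩ {x : ℝ × ℝ | s < x.1 + x.2})).toReal * s := by
    rw [Rev, setIntegral_congr_ae hboxm (ae_identity c s),
      setIntegral_indicator hE'm, setIntegral_const, smul_eq_mul, measureReal_def]
  have hfin1 : volume (box c ∩ {x : ℝ × ℝ | s < x.1 + x.2}) ≠ ⊤ := by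
    refine ne_top_of_le_ne_top ENNReal.one_ne_top ?_
    rw [← box_volume c]; exact measure_mono inter_subset_left
  have hM0 : 0 ≤ (volume (box c ∩ {x : ℝ × ℝ | s < x.1 + x.2})).toReal := ENNReal.toReal_nonneg
  have hM1 : (volume (box c ∩ {x : ℝ × ℝ | s < x.1 + x.2})).toReal ≤ 1 := by
    have h : volume (box c ∩ {x : ℝ × ℝ | s < x.1 + x.2}) ≤ 1 := by
      rw [← box_volume c]; exact measure_mono inter_subset_left
    simpa using ENNReal.toReal_mono (by simp) h
  rcases le_or_gt s (2*c) with hcase | hcase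
  · rw [hRev]
    nlinarith [mul_le_mul_of_nonneg_right hM1 hs]
  rcases le_or_gt s (2*c+1) with hcase2 | hcase2
  · -- 2c < s ≤ 2c+1
    have hTrsub : regionBetween (fun _ => c) (fun x => s - x) (Ioo c (s - c)) ⊆
        box c \ {x : ℝ × ℝ | s < x.1 + x.2} := by
      rintro ⟨x1, x2⟩ ⟨hx1, hx2⟩
      simp only [mem_Ioo] at hx1 hx2
      refine ⟨⟨mem_Icc.mpr ⟨le_of_lt hx1.1, by linarith [hx1.2]⟩,
        mem_Icc.mpr ⟨le_of_lt hx2.1, by linarith [hx2.2, hx1.1]⟩⟩, ?_⟩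
      simp only [mem_setOf_eq, not_lt]
      linarith [hx2.2]
    have hfin2 : volume (box c \ {x : ℝ × ℝ | s < x.1 + x.2}) ≠ ⊤ := by
      refine ne_top_of_le_ne_top ENNReal.one_ne_top ?_
      rw [← box_volume c]; exact measure_mono diff_subset
    have hlow : ENNReal.ofReal ((s - 2*c)^2/2) ≤ volume (box c \ {x : ℝ × ℝ | s < x.1 + x.2}) := by
      rw [← tri_volume c s (le_of_lt hcase)]
      exact measure_mono hTrsub
    have hlowR : (s - 2*c)^2/2 ≤ (volume (box c \ {x : ℝ × ℝ | s < x.1 + x.2})).toReal :=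
      (ENNReal.ofReal_le_iff_le_toReal hfin2).mp hlow
    have hsum : (volume (box c ∩ {x : ℝ × ℝ | s < x.1 + x.2})).toReal
        + (volume (box c \ {x : ℝ × ℝ | s < x.1 + x.2})).toReal = 1 := by
      rw [← ENNReal.toReal_add hfin1 hfin2, measure_inter_add_diff (box c) hE'm, box_volume c]
      simp
    have hM : (volume (box c ∩ {x : ℝ × ℝ | s < x.1 + x.2})).toReal ≤ 1 - (s - 2*c)^2/2 := by
      linarith
    rw [hRev]
    calc (volume (box c ∩ {x : ℝ × ℝ | s < x.1 + x.2})).toReal * s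
        ≤ (1 - (s - 2*c)^2/2) * s := mul_le_mul_of_nonneg_right hM hs
      _ = s * (1 - (s - 2*c)^2/2) := by ring
      _ ≤ BRev c := cubic_bound c hc s hs
  rcases le_or_gt s (2*c+2) with hcase3 | hcase3
  · -- 2c+1 < s ≤ 2c+2
    have hsub : box c ∩ {x : ℝ × ℝ | s < x.1 + x.2} ⊆
        regionBetween (fun x => s - x) (fun _ => c+1) (Ioo (s-c-1) (c+1))
          ∪ ({x : ℝ × ℝ | x.2 = c+1} ∪ {x : ℝ × ℝ | x.1 = c+1}) := by
      rintro ⟨x1, x2⟩ ⟨hbox, hsum⟩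
      simp only [box, mem_prod, mem_Icc] at hbox
      simp only [mem_setOf_eq] at hsum
      by_cases h2 : x2 = c+1
      · exact Or.inr (Or.inl h2)
      by_cases hx1 : x1 = c+1
      · exact Or.inr (Or.inr hx1)
      left
      have hA : s - c - 1 < x1 := by linarith [hbox.2.2]
      have hB : x1 < c + 1 := lt_of_le_of_ne hbox.1.2 hx1
      have hC : s - x1 < x2 := by linarith
      have hD : x2 < c + 1 := lt_of_le_of_ne hbox.2.2 h2
      exact ⟨mem_Ioo.mpr ⟨hA, hB⟩, mem_Ioo.mpr ⟨hC, hD⟩⟩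
    have hH : volume {x : ℝ × ℝ | x.2 = c+1} = 0 := by
      have h : {x : ℝ × ℝ | x.2 = c+1} = (univ : Set ℝ) ×ˢ ({c+1} : Set ℝ) := by
        ext ⟨x1, x2⟩; simp [eq_comm]
      rw [h, Measure.volume_eq_prod ℝ ℝ, Measure.prod_prod]
      simp
    have hV : volume {x : ℝ × ℝ | x.1 = c+1} = 0 := by
      have h : {x : ℝ × ℝ | x.1 = c+1} = ({c+1} : Set ℝ) ×ˢ (univ : Set ℝ) := by
        ext ⟨x1, x2⟩; simp [eq_comm]
      rw [h, Measure.volume_eq_prod ℝ ℝ, Measure.prod_prod]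
      simp
    have hbound : volume (box c ∩ {x : ℝ × ℝ | s < x.1 + x.2})
        ≤ ENNReal.ofReal ((2*c+2-s)^2/2) := by
      calc volume (box c ∩ {x : ℝ × ℝ | s < x.1 + x.2})
          ≤ volume (regionBetween (fun x => s - x) (fun _ => c+1) (Ioo (s-c-1) (c+1))
              ∪ ({x : ℝ × ℝ | x.2 = c+1} ∪ {x : ℝ × ℝ | x.1 = c+1})) := measure_mono hsub
        _ ≤ volume (regionBetween (fun x => s - x) (fun _ => c+1) (Ioo (s-c-1) (c+1)))
              + volume ({x : ℝ × ℝ | x.2 = c+1} ∪ {x : ℝ × ℝ | x.1 = c+1}) := measure_union_le _ _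
        _ ≤ volume (regionBetween (fun x => s - x) (fun _ => c+1) (Ioo (s-c-1) (c+1)))
              + (volume {x : ℝ × ℝ | x.2 = c+1} + volume {x : ℝ × ℝ | x.1 = c+1}) := by
            exact add_le_add le_rfl (measure_union_le _ _)
        _ = ENNReal.ofReal ((2*c+2-s)^2/2) := by
            rw [upper_volume c s hcase3, hH, hV]; simp
    have hMle : (volume (box c ∩ {x : ℝ × ℝ | s < x.1 + x.2})).toReal ≤ (2*c+2-s)^2/2 := by
      have := ENNReal.toReal_mono (by simp : ENNReal.ofReal ((2*c+2-s)^2/2) ≠ ⊤) hbound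
      rwa [ENNReal.toReal_ofReal (by positivity)] at this
    rw [hRev]
    have step1 : (volume (box c ∩ {x : ℝ × ℝ | s < x.1 + x.2})).toReal * s
        ≤ ((2*c+2-s)^2/2) * s := mul_le_mul_of_nonneg_right hMle hs
    have step2 : ((2*c+2-s)^2/2) * s ≤ (2*c+1)/2 := by
      nlinarith [mul_nonneg (mul_nonneg (by linarith : (0:ℝ) ≤ s - 2*c - 1) (by linarith : (0:ℝ) ≤ 2*c+2-s)) hs,
        mul_nonneg (sq_nonneg (s - 2*c - 1)) hs, sq_nonneg (2*c+2-s), sq_nonneg (s-2*c-1)]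
    linarith
  · -- s > 2c+2 : empty intersection
    have hempty : box c ∩ {x : ℝ × ℝ | s < x.1 + x.2} = ∅ := by
      ext ⟨x1, x2⟩
      simp only [box, mem_inter_iff, mem_prod, mem_Icc, mem_setOf_eq, mem_empty_iff_false,
        iff_false, not_and]
      intro hb hlt
      linarith [hb.1.2, hb.2.2, hlt]
    rw [hRev, hempty]
    simp only [measure_empty, ENNReal.toReal_zero, zero_mul]
    linarith

set_option maxHeartbeats 1600000 in
lemma brev_lt_opt (c : ℝ) (h1 : 0.077 < c) (h2 : c < cbar) : BRev c < Opt c := by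
  have hc0 : (0:ℝ) < c := by linarith
  set a := Real.sqrt 2 with ha_def
  set b := Real.sqrt (c * (3*c+2)) with hb_def
  set r := Real.sqrt (4*c^2+6) with hr_def
  have ha0 : 0 < a := Real.sqrt_pos.mpr (by norm_num)
  have hb0 : 0 ≤ b := Real.sqrt_nonneg _
  have hr0 : 0 ≤ r := Real.sqrt_nonneg _
  have ha : a^2 = 2 := Real.sq_sqrt (by norm_num)
  have hb : b^2 = 3*c^2 + 2*c := by
    rw [hb_def, Real.sq_sqrt (by positivity)]; ring
  have hhr : r^2 = 4*c^2+6 := Real.sq_sqrt (by positivity)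
  have ha1 : 1.414 < a := by nlinarith
  have ha2 : a < 1.4143 := by nlinarith
  -- from c < cbar derive P < 0
  have hP : c^2 + 4*a*c - 2*c + 4*a - 6 < 0 := by
    have h15 : (0:ℝ) ≤ 15 - 8*a := by nlinarith
    have hlt : c + 2*a - 1 < Real.sqrt (15 - 8*a) := by
      have : cbar = Real.sqrt (15 - 8*a) - 2*a + 1 := rfl
      linarith [h2, this ▸ h2]
    have hx0 : (0:ℝ) ≤ c + 2*a - 1 := by nlinarith
    have := (Real.lt_sqrt hx0).mp hlt
    nlinarith [this]
  have hc94 : c < 0.094 := by nlinarith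

  have hc1 : c ≤ 1 := by linarith
  -- m > 0
  have hmid : ((6+2*c-c^2)^2 - 32*(c+1)^2) = (-(c^2+4*a*c-2*c+4*a-6))*(6+2*c-c^2+4*a*(c+1)) + 16*(c+1)^2*(a^2-2) := by
    ring
  have hpos2 : (0:ℝ) < 6+2*c-c^2+4*a*(c+1) := by nlinarith
  have hm : (0:ℝ) < ((6+2*c-c^2)^2 - 32*(c+1)^2) := by
    rw [hmid, ha]
    have := mul_pos (neg_pos.mpr hP) hpos2
    linarith
  -- h2 > 0
  have hc8 : c^8 ≤ 0.094^8 := pow_le_pow_left₀ hc0.le hc94.le 8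
  have htail : ∀ n : ℕ, 8 ≤ n → c^n ≤ c^8 := fun n hn => pow_le_pow_of_le_one hc0.le hc1 hn
  have hh2 : (0:ℝ) < (-64 + 1792*c + 13504*c^2 + 33344*c^3 + 44032*c^4 + 57536*c^5 + 58392*c^6 + 13896*c^7 - 26929*c^8 - 76584*c^9 - 133092*c^10 - 149656*c^11 - 145334*c^12 - 102808*c^13 - 50876*c^14 - 18800*c^15 - 2209*c^16) := by
    have l9 := htail 9 (by norm_num); have l10 := htail 10 (by norm_num)
    have l11 := htail 11 (by norm_num); have l12 := htail 12 (by norm_num)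
    have l13 := htail 13 (by norm_num); have l14 := htail 14 (by norm_num)
    have l15 := htail 15 (by norm_num); have l16 := htail 16 (by norm_num)
    have p2 : (0:ℝ) ≤ c^2 := by positivity
    have p3 : (0:ℝ) ≤ c^3 := by positivity
    have p4 : (0:ℝ) ≤ c^4 := by positivity
    have p5 : (0:ℝ) ≤ c^5 := by positivity
    have p6 : (0:ℝ) ≤ c^6 := by positivity
    have p7 : (0:ℝ) ≤ c^7 := by positivity
    have hnum : (0.094:ℝ)^8 ≤ 0.0000000061 := by norm_num
    linarith
  -- T > 0
  have hT : (0:ℝ) < (384 + 2208*c + 3216*c^2 + 912*c^3 + 1392*c^4 + 5208*c^5 + 4572*c^6 + 1764*c^7 + 864*c^8 + 840*c^9 + 996*c^10 + 492*c^11) := by positivity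
  -- F identity
  have hF : 2*(384 + 2208*c + 3216*c^2 + 912*c^3 + 1392*c^4 + 5208*c^5 + 4572*c^6 + 1764*c^7 + 864*c^8 + 840*c^9 + 996*c^10 + 492*c^11)^2 - (-544 - 3072*c - 5232*c^2 + 592*c^3 + 5268*c^4 + 4728*c^5 + 13396*c^6 + 19656*c^7 + 16515*c^8 + 9796*c^9 + 2586*c^10 + 12*c^11 + 47*c^12)^2 = ((6+2*c-c^2)^2 - 32*(c+1)^2)^2*(-64 + 1792*c + 13504*c^2 + 33344*c^3 + 44032*c^4 + 57536*c^5 + 58392*c^6 + 13896*c^7 - 26929*c^8 - 76584*c^9 - 133092*c^10 - 149656*c^11 - 145334*c^12 - 102808*c^13 - 50876*c^14 - 18800*c^15 - 2209*c^16) := by ring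
  have hF0 : (0:ℝ) < 2*(384 + 2208*c + 3216*c^2 + 912*c^3 + 1392*c^4 + 5208*c^5 + 4572*c^6 + 1764*c^7 + 864*c^8 + 840*c^9 + 996*c^10 + 492*c^11)^2 - (-544 - 3072*c - 5232*c^2 + 592*c^3 + 5268*c^4 + 4728*c^5 + 13396*c^6 + 19656*c^7 + 16515*c^8 + 9796*c^9 + 2586*c^10 + 12*c^11 + 47*c^12)^2 := by
    rw [hF]; exact mul_pos (pow_pos hm 2) hh2
  -- S + T a > 0
  have hST : (0:ℝ) < (-544 - 3072*c - 5232*c^2 + 592*c^3 + 5268*c^4 + 4728*c^5 + 13396*c^6 + 19656*c^7 + 16515*c^8 + 9796*c^9 + 2586*c^10 + 12*c^11 + 47*c^12) + (384 + 2208*c + 3216*c^2 + 912*c^3 + 1392*c^4 + 5208*c^5 + 4572*c^6 + 1764*c^7 + 864*c^8 + 840*c^9 + 996*c^10 + 492*c^11)*a := by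
    have hTa : (0:ℝ) < (384 + 2208*c + 3216*c^2 + 912*c^3 + 1392*c^4 + 5208*c^5 + 4572*c^6 + 1764*c^7 + 864*c^8 + 840*c^9 + 996*c^10 + 492*c^11)*a := mul_pos hT ha0
    have hsqlt : |(-544 - 3072*c - 5232*c^2 + 592*c^3 + 5268*c^4 + 4728*c^5 + 13396*c^6 + 19656*c^7 + 16515*c^8 + 9796*c^9 + 2586*c^10 + 12*c^11 + 47*c^12)|^2 < ((384 + 2208*c + 3216*c^2 + 912*c^3 + 1392*c^4 + 5208*c^5 + 4572*c^6 + 1764*c^7 + 864*c^8 + 840*c^9 + 996*c^10 + 492*c^11)*a)^2 := by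
      rw [sq_abs, mul_pow, ha]; linarith
    have := lt_of_pow_lt_pow_left₀ 2 hTa.le hsqlt
    linarith [neg_abs_le (-544 - 3072*c - 5232*c^2 + 592*c^3 + 5268*c^4 + 4728*c^5 + 13396*c^6 + 19656*c^7 + 16515*c^8 + 9796*c^9 + 2586*c^10 + 12*c^11 + 47*c^12)]
  -- V identity
  have hV : ((24*c + 12*c^2 - 24*c^3 + 18*c^4) + (4*c + 18*c^2 + 30*c^3 + 22*c^4 + 6*c^5)*a)^2*(3*c^2 + 2*c) - ((-16 - 60*c - 6*c^2 + 12*c^3 + 3*c^4 + 66*c^5 + 13*c^6) + (12 + 24*c + 6*c^2 - 6*c^3 + 6*c^4 + 6*c^5)*a)^2 = (-544 - 3072*c - 5232*c^2 + 592*c^3 + 5268*c^4 + 4728*c^5 + 13396*c^6 + 19656*c^7 + 16515*c^8 + 9796*c^9 + 2586*c^10 + 12*c^11 + 47*c^12) + (384 + 2208*c + 3216*c^2 + 912*c^3 + 1392*c^4 + 5208*c^5 + 4572*c^6 + 1764*c^7 + 864*c^8 + 840*c^9 + 996*c^10 + 492*c^11)*a := by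
    linear_combination ((3*c^2 + 2*c)*(4*c + 18*c^2 + 30*c^3 + 22*c^4 + 6*c^5)^2 - (12 + 24*c + 6*c^2 - 6*c^3 + 6*c^4 + 6*c^5)^2) * ha
  -- W > 0
  have hW : (0:ℝ) < ((24*c + 12*c^2 - 24*c^3 + 18*c^4) + (4*c + 18*c^2 + 30*c^3 + 22*c^4 + 6*c^5)*a) := by
    nlinarith [pow_pos hc0 2, pow_pos hc0 3, pow_pos hc0 4, pow_pos hc0 5,
      mul_pos (pow_pos hc0 2) ha0, mul_pos (pow_pos hc0 3) ha0,
      mul_pos (pow_pos hc0 4) ha0, mul_pos (pow_pos hc0 5) ha0, mul_pos hc0 ha0]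
  -- U + W b > 0
  have hUWb : (0:ℝ) < ((-16 - 60*c - 6*c^2 + 12*c^3 + 3*c^4 + 66*c^5 + 13*c^6) + (12 + 24*c + 6*c^2 - 6*c^3 + 6*c^4 + 6*c^5)*a) + ((24*c + 12*c^2 - 24*c^3 + 18*c^4) + (4*c + 18*c^2 + 30*c^3 + 22*c^4 + 6*c^5)*a)*b := by
    have hWb : (0:ℝ) ≤ ((24*c + 12*c^2 - 24*c^3 + 18*c^4) + (4*c + 18*c^2 + 30*c^3 + 22*c^4 + 6*c^5)*a)*b := mul_nonneg hW.le hb0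
    have hsqlt : |((-16 - 60*c - 6*c^2 + 12*c^3 + 3*c^4 + 66*c^5 + 13*c^6) + (12 + 24*c + 6*c^2 - 6*c^3 + 6*c^4 + 6*c^5)*a)|^2 < (((24*c + 12*c^2 - 24*c^3 + 18*c^4) + (4*c + 18*c^2 + 30*c^3 + 22*c^4 + 6*c^5)*a)*b)^2 := by
      rw [sq_abs, mul_pow, hb]; linarith
    have := lt_of_pow_lt_pow_left₀ 2 hWb hsqlt
    linarith [neg_abs_le ((-16 - 60*c - 6*c^2 + 12*c^3 + 3*c^4 + 66*c^5 + 13*c^6) + (12 + 24*c + 6*c^2 - 6*c^3 + 6*c^4 + 6*c^5)*a)]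
  -- square identity
  have hsq : (a*((c+1)^3) + b*(3*c^2 + 2*c) + (3*c^2 - 6*c + 6))^2 - (4*c^2+6)*(2*c^2+3)^2 = ((-16 - 60*c - 6*c^2 + 12*c^3 + 3*c^4 + 66*c^5 + 13*c^6) + (12 + 24*c + 6*c^2 - 6*c^3 + 6*c^4 + 6*c^5)*a) + ((24*c + 12*c^2 - 24*c^3 + 18*c^4) + (4*c + 18*c^2 + 30*c^3 + 22*c^4 + 6*c^5)*a)*b := by
    linear_combination (((c+1)^3))^2*ha + ((3*c^2 + 2*c))^2*hb
  have hL0 : (0:ℝ) < a*((c+1)^3) + b*(3*c^2 + 2*c) + (3*c^2 - 6*c + 6) := by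
    have h1' : (0:ℝ) < a*((c+1)^3) := mul_pos ha0 (by positivity)
    have h2' : (0:ℝ) ≤ b*(3*c^2 + 2*c) := mul_nonneg hb0 (by positivity)
    nlinarith
  have hG : r*(2*c^2+3) < a*((c+1)^3) + b*(3*c^2 + 2*c) + (3*c^2 - 6*c + 6) := by
    have hy0 : (0:ℝ) ≤ r*(2*c^2+3) := mul_nonneg hr0 (by positivity)
    have hsqlt : (r*(2*c^2+3))^2 < (a*((c+1)^3) + b*(3*c^2 + 2*c) + (3*c^2 - 6*c + 6))^2 := by
      rw [mul_pow, hhr]; linarith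
    calc r*(2*c^2+3) = |r*(2*c^2+3)| := (abs_of_nonneg hy0).symm
      _ < a*((c+1)^3) + b*(3*c^2 + 2*c) + (3*c^2 - 6*c + 6) := by
          apply lt_of_pow_lt_pow_left₀ 2 hL0.le
          rw [sq_abs]; exact hsqlt
  -- conclude
  have hOB : Opt c - BRev c = 2/27 * (a*((c+1)^3) + b*(3*c^2 + 2*c) + (3*c^2 - 6*c + 6) - r*(2*c^2+3)) := by
    rw [brev_eq, Opt, ← ha_def, ← hb_def, ← hr_def]; ring
  linarith [hOB, hG]


/-- For every `c ≥ 0` and `s ≥ 0`, the full-bundling utility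
`u_s(x) = max{0, x₁ + x₂ − s}` has `Rev_c(u_s) ≤ BRev(c)`; consequently, for
`0.077 < c < c̄` no full-bundling mechanism attains the relaxed optimum:
`Rev_c(u_s) ≤ BRev(c) < Opt(c)` for all `s ≥ 0`. -/
theorem full_bundling_never_attains_relaxed_opt :
    (∀ c : ℝ, 0 ≤ c → ∀ s : ℝ, 0 ≤ s →
      Rev c (fun x : ℝ × ℝ => max 0 (x.1 + x.2 - s)) ≤ BRev c) ∧
    (∀ c : ℝ, 0.077 < c → c < cbar → ∀ s : ℝ, 0 ≤ s →
      Rev c (fun x : ℝ × ℝ => max 0 (x.1 + x.2 - s)) ≤ BRev c ∧ BRev c < Opt c) := by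
  refine ⟨fun c hc s hs => rev_le c hc s hs, fun c h1 h2 s hs => ?_⟩
  exact ⟨rev_le c (le_of_lt (lt_trans (by norm_num) h1)) s hs, brev_lt_opt c h1 h2⟩
end
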